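/- Classical convex-split bound: Let p and q be probability distributions on a finite set with supp(p) ⊆ supp(q), and let λ = max_i p_i/q_i (the exponential of the max-relative divergence). Define the mixture M on the (m+1)-fold product space as M = (1/(m+1)) Σ_{j=0}^{m} q^{⊗j} ⊗ p ⊗ q^{⊗(m-j)}. Then the total variation distance between M and q^{⊗(m+1)} satisfies ‖M − q^{⊗(m+1)}‖_1^2 ≤ λ/(m+1), where ‖·‖_1 denotes half the ℓ1 distance (total variation). -/

import Mathlib

open Finset

/-- A probability vector on a finite index set. -/
def IsProbVec {ι : Type*} [Fintype ι] (x : ι → ℝ) : Prop :=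
  (∀ i, 0 ≤ x i) ∧ ∑ i, x i = 1

/-- `x` majorizes `y`: the total sums agree and, for every `k`, the sum of the `k`
largest entries of `x` is at least the sum of the `k` largest entries of `y`
(expressed via subsets). -/
def Majorizes {ι κ : Type*} [Fintype ι] [Fintype κ] (x : ι → ℝ) (y : κ → ℝ) : Prop :=
  (∑ i, x i = ∑ j, y j) ∧
    ∀ s : Finset κ, ∃ t : Finset ι, t.card = s.card ∧ ∑ j ∈ s, y j ≤ ∑ i ∈ t, x i

/-- Tensor (Kronecker) product of vectors. -/
noncomputable def tens {ι κ : Type*} (x : ι → ℝ) (y : κ → ℝ) : ι × κ → ℝ :=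
  fun p => x p.1 * y p.2

/-- `k`-fold tensor power of a vector. -/
noncomputable def tpow {ι : Type*} (x : ι → ℝ) (k : ℕ) : (Fin k → ι) → ℝ :=
  fun f => ∏ j, x (f j)

/-- The Duan state `z_k^D(p,q) = (1/k) ⊕_{i=1}^{k} p^{⊗(k-i)} ⊗ q^{⊗(i-1)}`;
block `i : Fin k` is `(1/k) · p^{⊗(k-1-i)} ⊗ q^{⊗ i}`. -/
noncomputable def duan {d : ℕ} (k : ℕ) (p q : Fin d → ℝ) :
    Fin k × (Fin (k - 1) → Fin d) → ℝ :=
  fun x => (1 / (k : ℝ)) *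
    ∏ j : Fin (k - 1), if (j : ℕ) < k - 1 - (x.1 : ℕ) then p (x.2 j) else q (x.2 j)

/-- Total variation distance: half the ℓ¹ distance. -/
noncomputable def tvDist {ι : Type*} [Fintype ι] (a b : ι → ℝ) : ℝ :=
  (1 / 2) * ∑ i, |a i - b i|

-- `λ = max_i p_i / q_i` (with the convention `0/0 = 0`), i.e. `2^{D_∞(p‖q)}`.
open Classical in
noncomputable def maxRatio {S : Type*} [Fintype S] [Nonempty S] (p q : S → ℝ) : ℝ :=
  Finset.univ.sup' Finset.univ_nonempty (fun i => if q i = 0 then 0 else p i / q i)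

/-- The convex-split mixture `M = (1/(m+1)) Σ_{j=0}^{m} q^{⊗j} ⊗ p ⊗ q^{⊗(m-j)}`
on the `(m+1)`-fold product space. -/
noncomputable def convexSplitM {S : Type*} [Fintype S] (m : ℕ)
    (p q : S → ℝ) : (Fin (m + 1) → S) → ℝ :=
  fun f => (1 / ((m : ℝ) + 1)) *
    ∑ j : Fin (m + 1), p (f j) * ∏ i ∈ Finset.univ.erase j, q (f i)

set_option maxHeartbeats 2000000 in
/-- Classical convex-split bound:
`‖M − q^{⊗(m+1)}‖₁² ≤ λ/(m+1)` where `λ = max_i p_i/q_i`. -/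
theorem convex_split_bound {S : Type*} [Fintype S] [Nonempty S]
    (p q : S → ℝ) (hp : IsProbVec p) (hq : IsProbVec q)
    (hsupp : ∀ i, q i = 0 → p i = 0) (m : ℕ) :
    (tvDist (convexSplitM m p q) (fun f => ∏ i, q (f i))) ^ 2 ≤
      maxRatio p q / ((m : ℝ) + 1) := by
  classical
  set L : ℝ := maxRatio p q with hLdef
  set N : ℝ := (m : ℝ) + 1 with hNdef
  have hN0 : (0:ℝ) < N := by positivity
  set r : S → ℝ := fun i => if q i = 0 then 0 else p i / q i with hrdef
  have hqr : ∀ i, q i * r i = p i := by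
    intro i
    by_cases h : q i = 0
    · simp [hrdef, h, hsupp i h]
    · simp only [hrdef, if_neg h]
      field_simp
  have hr0 : ∀ i, 0 ≤ r i := by
    intro i
    by_cases h : q i = 0
    · simp [hrdef, h]
    · simp only [hrdef, if_neg h]
      exact div_nonneg (hp.1 i) (hq.1 i)
  have hrL : ∀ i, r i ≤ L := by
    intro i
    have := Finset.le_sup' (fun i => if q i = 0 then 0 else p i / q i) (Finset.mem_univ i)
    simpa [hLdef, maxRatio, hrdef, -Finset.le_sup'_iff] using this
  have hL0 : (0:ℝ) ≤ L := le_trans (hr0 (Classical.arbitrary S)) (hrL _)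
  have hrr : ∑ s, q s * r s * r s ≤ L := by
    calc ∑ s, q s * r s * r s = ∑ s, p s * r s := by
          refine Finset.sum_congr rfl fun s _ => ?_
          rw [hqr]
      _ ≤ ∑ s, p s * L := by
          refine Finset.sum_le_sum fun s _ => ?_
          exact mul_le_mul_of_nonneg_left (hrL s) (hp.1 s)
      _ = L := by rw [← Finset.sum_mul, hp.2, one_mul]
  -- key sum-product exchange
  have key : ∀ u : Fin (m+1) → S → ℝ,
      ∑ f : Fin (m+1) → S, ∏ i, u i (f i) = ∏ i, ∑ s, u i s :=
    fun u => (Fintype.prod_sum _).symm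
  -- first moment
  have hQr : ∀ j : Fin (m+1), ∑ f : Fin (m+1) → S, (∏ i, q (f i)) * r (f j) = 1 := by
    intro j
    calc ∑ f : Fin (m+1) → S, (∏ i, q (f i)) * r (f j)
        = ∑ f : Fin (m+1) → S, ∏ i, (q (f i) * if i = j then r (f i) else 1) := by
          refine Finset.sum_congr rfl fun f _ => ?_
          rw [Finset.prod_mul_distrib]
          simp [Finset.prod_ite_eq']
      _ = ∏ i, ∑ s, q s * (if i = j then r s else 1) :=
          key (fun i s => q s * (if i = j then r s else 1))
      _ = 1 := by
          apply Finset.prod_eq_one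
          intro i _
          by_cases h : i = j
          · subst h
            have h : ∀ s : S, (q s * if i = i then r s else 1) = p s := fun s => by
              rw [if_pos rfl, hqr]
            rw [Finset.sum_congr rfl fun s _ => h s]
            exact hp.2
          · simp [h, hq.2]
  -- normalization
  have hQ1 : ∑ f : Fin (m+1) → S, ∏ i, q (f i) = 1 := by
    rw [key (fun _ s => q s)]
    simp [hq.2]
  -- second moments
  have hQrr_eq : ∀ j k : Fin (m+1), j ≠ k →
      ∑ f : Fin (m+1) → S, (∏ i, q (f i)) * r (f j) * r (f k) = 1 := by
    intro j k hjk
    calc ∑ f : Fin (m+1) → S, (∏ i, q (f i)) * r (f j) * r (f k)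
        = ∑ f : Fin (m+1) → S,
            ∏ i, (q (f i) * (if i = j then r (f i) else 1) * (if i = k then r (f i) else 1)) := by
          refine Finset.sum_congr rfl fun f _ => ?_
          rw [Finset.prod_mul_distrib, Finset.prod_mul_distrib]
          simp [Finset.prod_ite_eq']
      _ = ∏ i, ∑ s, q s * (if i = j then r s else 1) * (if i = k then r s else 1) :=
          key (fun i s => q s * (if i = j then r s else 1) * (if i = k then r s else 1))
      _ = 1 := by
          apply Finset.prod_eq_one
          intro i _
          by_cases h1 : i = j
          · subst h1
            have h : ∀ s : S, (q s * if i = i then r s else 1) * (if i = k then r s else 1) = p s :=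
              fun s => by rw [if_pos rfl, if_neg hjk, mul_one, hqr]
            rw [Finset.sum_congr rfl fun s _ => h s]
            exact hp.2
          · by_cases h2 : i = k
            · subst h2
              have h : ∀ s : S, (q s * if i = j then r s else 1) * (if i = i then r s else 1) = p s :=
                fun s => by rw [if_pos rfl, if_neg h1, mul_one, hqr]
              rw [Finset.sum_congr rfl fun s _ => h s]
              exact hp.2
            · simp [h1, h2, hq.2]
  have hQrr_diag : ∀ j : Fin (m+1),
      ∑ f : Fin (m+1) → S, (∏ i, q (f i)) * r (f j) * r (f j) ≤ L := by
    intro j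
    have heq : ∑ f : Fin (m+1) → S, (∏ i, q (f i)) * r (f j) * r (f j)
        = ∏ i : Fin (m+1), (if i = j then (∑ s, q s * r s * r s) else 1) := by
      calc ∑ f : Fin (m+1) → S, (∏ i, q (f i)) * r (f j) * r (f j)
          = ∑ f : Fin (m+1) → S,
              ∏ i, (q (f i) * (if i = j then r (f i) else 1) * (if i = j then r (f i) else 1)) := by
            refine Finset.sum_congr rfl fun f _ => ?_
            rw [Finset.prod_mul_distrib, Finset.prod_mul_distrib]
            simp [Finset.prod_ite_eq']
        _ = ∏ i, ∑ s, q s * (if i = j then r s else 1) * (if i = j then r s else 1) :=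
            key (fun i s => q s * (if i = j then r s else 1) * (if i = j then r s else 1))
        _ = ∏ i : Fin (m+1), (if i = j then (∑ s, q s * r s * r s) else 1) := by
            refine Finset.prod_congr rfl fun i _ => ?_
            by_cases h : i = j
            · simp [h]
            · simp [h, hq.2]
    rw [heq]
    simp only [Finset.prod_ite_eq', Finset.mem_univ, if_pos]
    exact hrr
  -- rewrite M
  have hterm : ∀ (f : Fin (m+1) → S) (j : Fin (m+1)),
      p (f j) * ∏ i ∈ Finset.univ.erase j, q (f i) = (∏ i, q (f i)) * r (f j) := by
    intro f j
    rw [← Finset.mul_prod_erase Finset.univ (fun i => q (f i)) (Finset.mem_univ j),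
      ← hqr (f j)]
    ring
  have hM : ∀ f : Fin (m+1) → S,
      convexSplitM m p q f - (∏ i, q (f i))
        = (∏ i, q (f i)) * ((1/N) * (∑ j, r (f j)) - 1) := by
    intro f
    have h0 : convexSplitM m p q f
        = (1/N) * ∑ j : Fin (m+1), p (f j) * ∏ i ∈ Finset.univ.erase j, q (f i) := rfl
    rw [h0, Finset.sum_congr rfl (fun j _ => hterm f j), ← Finset.mul_sum]
    ring
  -- sum Q * A
  have hQA : ∑ f : Fin (m+1) → S, (∏ i, q (f i)) * (∑ j, r (f j)) = N := by
    calc ∑ f : Fin (m+1) → S, (∏ i, q (f i)) * (∑ j, r (f j))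
        = ∑ f : Fin (m+1) → S, ∑ j, (∏ i, q (f i)) * r (f j) := by
          refine Finset.sum_congr rfl fun f _ => Finset.mul_sum _ _ _
      _ = ∑ j : Fin (m+1), ∑ f : Fin (m+1) → S, (∏ i, q (f i)) * r (f j) :=
          Finset.sum_comm
      _ = ∑ _j : Fin (m+1), (1:ℝ) := Finset.sum_congr rfl fun j _ => hQr j
      _ = N := by simp [hNdef]
  -- sum Q * A^2
  have hQA2 : ∑ f : Fin (m+1) → S, (∏ i, q (f i)) * (∑ j, r (f j))^2 ≤ N * L + N * m := by
    have hexp : ∀ f : Fin (m+1) → S, (∏ i, q (f i)) * (∑ j, r (f j))^2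
        = ∑ j, ∑ k, (∏ i, q (f i)) * r (f j) * r (f k) := by
      intro f
      rw [sq, Finset.sum_mul_sum, Finset.mul_sum]
      refine Finset.sum_congr rfl fun j _ => ?_
      rw [Finset.mul_sum]
      exact Finset.sum_congr rfl fun k _ => by ring
    rw [Finset.sum_congr rfl fun f _ => hexp f, Finset.sum_comm]
    have hj : ∀ j : Fin (m+1),
        ∑ f : Fin (m+1) → S, ∑ k, (∏ i, q (f i)) * r (f j) * r (f k) ≤ L + m := by
      intro j
      rw [Finset.sum_comm, ← Finset.add_sum_erase Finset.univ _ (Finset.mem_univ j)]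
      have hoff : ∑ k ∈ Finset.univ.erase j,
          ∑ f : Fin (m+1) → S, (∏ i, q (f i)) * r (f j) * r (f k) = (m : ℝ) := by
        rw [Finset.sum_congr rfl
          (fun k hk => hQrr_eq j k (Ne.symm (Finset.mem_erase.1 hk).1))]
        simp [Finset.card_erase_of_mem]
      rw [hoff]
      have := hQrr_diag j
      linarith
    calc ∑ j : Fin (m+1), ∑ f : Fin (m+1) → S, ∑ k, (∏ i, q (f i)) * r (f j) * r (f k)
        ≤ ∑ _j : Fin (m+1), (L + (m:ℝ)) := Finset.sum_le_sum fun j _ => hj j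
      _ = N * L + N * m := by
          simp only [Finset.sum_const, Finset.card_univ, Fintype.card_fin, nsmul_eq_mul]
          push_cast [hNdef]
          ring
  -- the chi-square bound
  have hT : ∑ f : Fin (m+1) → S, (∏ i, q (f i)) * ((1/N) * (∑ j, r (f j)) - 1)^2
      ≤ (L - 1) / N := by
    have hexp : ∀ f : Fin (m+1) → S,
        (∏ i, q (f i)) * ((1/N) * (∑ j, r (f j)) - 1)^2
          = (1/N)^2 * ((∏ i, q (f i)) * (∑ j, r (f j))^2)
            - 2 * (1/N) * ((∏ i, q (f i)) * (∑ j, r (f j))) + (∏ i, q (f i)) := by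
      intro f; ring
    rw [Finset.sum_congr rfl fun f _ => hexp f]
    rw [Finset.sum_add_distrib, Finset.sum_sub_distrib, ← Finset.mul_sum, ← Finset.mul_sum]
    rw [hQA, hQ1]
    have h1 : (1/N)^2 * (∑ f : Fin (m+1) → S, (∏ i, q (f i)) * (∑ j, r (f j))^2)
        ≤ (1/N)^2 * (N * L + N * m) := by
      apply mul_le_mul_of_nonneg_left hQA2 (by positivity)
    have h2 : (1/N)^2 * (N * L + N * m) - 2 * (1/N) * N + 1 = (L - 1) / N := by
      rw [hNdef]
      field_simp
      ring
    linarith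
  -- Cauchy–Schwarz
  have hQ0 : ∀ f : Fin (m+1) → S, (0:ℝ) ≤ ∏ i, q (f i) :=
    fun f => Finset.prod_nonneg fun i _ => hq.1 (f i)
  have hs2 : (∑ f : Fin (m+1) → S, |convexSplitM m p q f - ∏ i, q (f i)|)^2
      ≤ (L - 1) / N := by
    have hCS := Finset.sum_mul_sq_le_sq_mul_sq Finset.univ
      (fun f : Fin (m+1) → S => Real.sqrt (∏ i, q (f i)))
      (fun f : Fin (m+1) → S =>
        Real.sqrt (∏ i, q (f i)) * |(1/N) * (∑ j, r (f j)) - 1|)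
    have huv : ∀ f : Fin (m+1) → S,
        Real.sqrt (∏ i, q (f i)) *
          (Real.sqrt (∏ i, q (f i)) * |(1/N) * (∑ j, r (f j)) - 1|)
          = |convexSplitM m p q f - ∏ i, q (f i)| := by
      intro f
      rw [hM f, abs_mul, abs_of_nonneg (hQ0 f), ← mul_assoc,
        Real.mul_self_sqrt (hQ0 f)]
    have hu2 : ∀ f : Fin (m+1) → S,
        Real.sqrt (∏ i, q (f i)) ^ 2 = ∏ i, q (f i) :=
      fun f => Real.sq_sqrt (hQ0 f)
    have hv2 : ∀ f : Fin (m+1) → S,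
        (Real.sqrt (∏ i, q (f i)) * |(1/N) * (∑ j, r (f j)) - 1|)^2
          = (∏ i, q (f i)) * ((1/N) * (∑ j, r (f j)) - 1)^2 := by
      intro f
      rw [mul_pow, Real.sq_sqrt (hQ0 f), sq_abs]
    calc (∑ f : Fin (m+1) → S, |convexSplitM m p q f - ∏ i, q (f i)|)^2
        = (∑ f : Fin (m+1) → S, Real.sqrt (∏ i, q (f i)) *
            (Real.sqrt (∏ i, q (f i)) * |(1/N) * (∑ j, r (f j)) - 1|))^2 := by
          rw [Finset.sum_congr rfl fun f _ => (huv f)]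
      _ ≤ (∑ f : Fin (m+1) → S, Real.sqrt (∏ i, q (f i)) ^ 2) *
            ∑ f : Fin (m+1) → S,
              (Real.sqrt (∏ i, q (f i)) * |(1/N) * (∑ j, r (f j)) - 1|)^2 := hCS
      _ = 1 * ∑ f : Fin (m+1) → S,
            (∏ i, q (f i)) * ((1/N) * (∑ j, r (f j)) - 1)^2 := by
          rw [Finset.sum_congr rfl fun f _ => hu2 f, hQ1,
            Finset.sum_congr rfl fun f _ => hv2 f]
      _ ≤ 1 * ((L - 1) / N) := by
          apply mul_le_mul_of_nonneg_left hT (by norm_num)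
      _ = (L - 1) / N := one_mul _
  -- conclusion
  have htv : tvDist (convexSplitM m p q) (fun f => ∏ i, q (f i))
      = (1/2) * ∑ f : Fin (m+1) → S, |convexSplitM m p q f - ∏ i, q (f i)| := rfl
  rw [htv, mul_pow]
  have hfin : (1/2:ℝ)^2 * ((L - 1) / N) ≤ L / N := by
    have h1 : (1/2:ℝ)^2 * ((L - 1) / N) = ((L-1)/4) / N := by ring
    rw [h1]
    gcongr
    linarith
  calc (1/2:ℝ)^2 * (∑ f : Fin (m+1) → S, |convexSplitM m p q f - ∏ i, q (f i)|)^2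
      ≤ (1/2:ℝ)^2 * ((L - 1) / N) := by
        apply mul_le_mul_of_nonneg_left hs2 (by norm_num)
    _ ≤ L / N := hfin
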